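/- Let A be an m×n real matrix, ε = (ε_1,…,ε_{min{m,n}}) a sign pattern with ε_0 := 1. Suppose: (a) S^-(Ax) ≤ S^-(x) for all x ∈ ℝ^n; and (b) whenever Ax ≠ 0 and S^-(Ax) = S^-(x) = r with 0 ≤ r ≤ min{m,n}−1, the sign of the first nonzero component of Ax equals ε_r ε_{r+1} times the sign of the first nonzero component of x. Then A is SR(ε): every nonzero r×r minor of A has sign ε_r for all 1 ≤ r ≤ min{m,n}. -/

import Mathlib

open Matrix Filter

/-- Number of sign changes in a list of reals (consecutive pairs with negative product). -/
noncomputable def signChanges (l : List ℝ) : ℕ :=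
  (l.zip l.tail).countP (fun p => decide (p.1 * p.2 < 0))

/-- `S^-(v)`: sign changes of the coordinates of `v` after discarding zero entries. -/
noncomputable def Sm {n : ℕ} (v : Fin n → ℝ) : ℕ :=
  signChanges ((List.ofFn v).filter (fun x => decide (x ≠ 0)))

/-- `S^+(v)`: maximal number of sign changes over all ±1 completions of the zero
entries of `v`, with the convention `S^+(0) = n`. -/
noncomputable def Sp {n : ℕ} (v : Fin n → ℝ) : ℕ :=
  if v = 0 then n
  else Finset.univ.sup (fun σ : Fin n → Bool =>
    signChanges (List.ofFn (fun i => if v i = 0 then (if σ i then (1:ℝ) else -1) else v i)))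

/-- First nonzero entry of a vector (`0` if the vector is zero). -/
noncomputable def firstNz {n : ℕ} (v : Fin n → ℝ) : ℝ :=
  ((List.ofFn v).filter (fun x => decide (x ≠ 0))).headI

/-- `A` is strictly sign regular with sign pattern `ε`:
every `r × r` minor (`1 ≤ r ≤ min m n`) is nonzero with sign `ε r`. -/
def ssrPattern {m n : ℕ} (A : Matrix (Fin m) (Fin n) ℝ) (ε : ℕ → ℝ) : Prop :=
  ∀ r : ℕ, 1 ≤ r → r ≤ min m n → ∀ (f : Fin r → Fin m) (g : Fin r → Fin n),
    StrictMono f → StrictMono g → 0 < ε r * (A.submatrix f g).det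

/-- `A` is sign regular with sign pattern `ε`:
every nonzero `r × r` minor (`1 ≤ r ≤ min m n`) has sign `ε r`. -/
def srPattern {m n : ℕ} (A : Matrix (Fin m) (Fin n) ℝ) (ε : ℕ → ℝ) : Prop :=
  ∀ r : ℕ, 1 ≤ r → r ≤ min m n → ∀ (f : Fin r → Fin m) (g : Fin r → Fin n),
    StrictMono f → StrictMono g → 0 ≤ ε r * (A.submatrix f g).det

/-- The map `f` picks out consecutive indices. -/
def Contig {r m : ℕ} (f : Fin r → Fin m) : Prop :=
  ∃ a : ℕ, ∀ i : Fin r, (f i : ℕ) = a + (i : ℕ)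

lemma sc_cons_cons (a b : ℝ) (l : List ℝ) :
    signChanges (a :: b :: l) = (if a * b < 0 then 1 else 0) + signChanges (b :: l) := by
  simp [signChanges, List.countP_cons, add_comm]

lemma sc_le (l : List ℝ) : signChanges l ≤ l.length - 1 := by
  unfold signChanges
  calc (l.zip l.tail).countP _ ≤ (l.zip l.tail).length := List.countP_le_length
    _ ≤ l.length - 1 := by rw [List.length_zip, List.length_tail]; omega

lemma sc_le_cons (a : ℝ) (l : List ℝ) : signChanges l ≤ signChanges (a :: l) := by
  cases l with
  | nil => simp [signChanges]
  | cons b t => rw [sc_cons_cons]; omega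

lemma sc_cons_le_cons_cons (b a : ℝ) (ha : a ≠ 0) (l : List ℝ) :
    signChanges (b :: l) ≤ signChanges (b :: a :: l) := by
  cases l with
  | nil => simp [signChanges]
  | cons c t =>
    rw [sc_cons_cons, sc_cons_cons, sc_cons_cons]
    have h : (if b*c<0 then 1 else 0) ≤ (if b*a<0 then (1:ℕ) else 0) + (if a*c<0 then 1 else 0) := by
      by_cases h1 : b * c < 0
      · rw [if_pos h1]
        by_cases h2 : b * a < 0
        · rw [if_pos h2]; omega
        · by_cases h3 : a * c < 0
          · rw [if_pos h3]; omega
          · exfalso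
            nlinarith [mul_nonneg (le_of_not_gt h2) (le_of_not_gt h3), mul_self_pos.mpr ha]
      · rw [if_neg h1]; omega
    omega

lemma sc_sublist {l' l : List ℝ} (h : List.Sublist l' l) (hl : ∀ a ∈ l, a ≠ 0) :
    signChanges l' ≤ signChanges l ∧ ∀ b : ℝ, signChanges (b :: l') ≤ signChanges (b :: l) := by
  induction h with
  | slnil => simp
  | @cons l₁ l₂ a h ih =>
    have ha : a ≠ 0 := hl a (List.mem_cons_self)
    have hl₂ : ∀ x ∈ l₂, x ≠ 0 := fun x hx => hl x (List.mem_cons_of_mem _ hx)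
    obtain ⟨h1, h2⟩ := ih hl₂
    exact ⟨h1.trans (sc_le_cons a l₂), fun b => (h2 b).trans (sc_cons_le_cons_cons b a ha l₂)⟩
  | @cons_cons l₁ l₂ a h ih =>
    have hl₂ : ∀ x ∈ l₂, x ≠ 0 := fun x hx => hl x (List.mem_cons_of_mem _ hx)
    obtain ⟨h1, h2⟩ := ih hl₂
    refine ⟨h2 a, fun b => ?_⟩
    rw [sc_cons_cons, sc_cons_cons]
    exact Nat.add_le_add_left (h2 a) _


lemma filter_range_eq_map {r n : ℕ} (g : Fin r → Fin n) (hg : StrictMono g) :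
    (List.finRange n).filter (fun j => decide (∃ i, g i = j)) = (List.finRange r).map g := by
  have hnd1 : ((List.finRange n).filter (fun j => decide (∃ i, g i = j))).Nodup :=
    (List.nodup_finRange n).filter _
  have hnd2 : ((List.finRange r).map g).Nodup :=
    (List.nodup_finRange r).map hg.injective
  have hperm := List.perm_of_nodup_nodup_toFinset_eq hnd1 hnd2 (by
    ext j
    simp [List.mem_filter, List.mem_finRange, List.mem_toFinset, eq_comm])
  haveI : IsAntisymm (Fin n) (· ≤ ·) := ⟨fun a b => le_antisymm⟩
  refine List.Perm.eq_of_pairwise' (r := (· ≤ ·)) ?_ ?_ hperm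
  · exact List.Pairwise.imp le_of_lt (((List.pairwise_lt_finRange n).filter _))
  · exact List.Pairwise.imp le_of_lt
      ((List.pairwise_lt_finRange r).map g (fun a b h => hg h))

lemma sc_ofFn_alt : ∀ {t : ℕ} (u : Fin (t+1) → ℝ),
    (∀ i : Fin t, u i.castSucc * u i.succ < 0) → signChanges (List.ofFn u) = t := by
  intro t
  induction t with
  | zero => intro u _; simp [signChanges]
  | succ t ih =>
    intro u h
    have h0 : u 0 * u 1 < 0 := by simpa using h 0
    have hrec := ih (fun i => u i.succ) (fun i => by
      simpa only [Fin.succ_castSucc] using h i.succ)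
    rw [List.ofFn_succ, List.ofFn_succ, sc_cons_cons]
    have h0' : u (0 : Fin (t+2)) * u ((0 : Fin (t+1)).succ) < 0 := by simpa using h0
    rw [List.ofFn_succ] at hrec
    have e : signChanges (u ((0 : Fin (t+1)).succ) :: List.ofFn fun i : Fin t => u i.succ.succ) = t := hrec
    rw [if_pos h0', e]
    omega

lemma Sm_eq_map {n : ℕ} (v : Fin n → ℝ) :
    Sm v = signChanges (((List.finRange n).filter (fun j => decide (v j ≠ 0))).map v) := by
  unfold Sm
  rw [List.ofFn_eq_map, List.filter_map]
  rfl

lemma firstNz_eq_map {n : ℕ} (v : Fin n → ℝ) :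
    firstNz v = (((List.finRange n).filter (fun j => decide (v j ≠ 0))).map v).headI := by
  unfold firstNz
  rw [List.ofFn_eq_map, List.filter_map]
  rfl



lemma Sm_ge {n t : ℕ} (v : Fin n → ℝ) (p : Fin (t+1) → Fin n) (hp : StrictMono p)
    (h : ∀ i : Fin t, v (p i.castSucc) * v (p i.succ) < 0) : t ≤ Sm v := by
  rcases Nat.eq_zero_or_pos t with rfl | ht
  · exact Nat.zero_le _
  have hnz : ∀ i, v (p i) ≠ 0 := by
    intro i
    rcases Nat.lt_or_ge (i : ℕ) t with hi | hi
    · have hpair := h ⟨i, hi⟩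
      intro e
      rw [show (⟨(i:ℕ), hi⟩ : Fin t).castSucc = i from Fin.ext rfl, e] at hpair
      simp at hpair
    · have hpair := h ⟨t-1, by omega⟩
      intro e
      rw [show (⟨t-1, by omega⟩ : Fin t).succ = i from
        Fin.ext (by simp only [Fin.val_succ]; omega), e] at hpair
      simp at hpair
  have hsub : List.Sublist ((List.finRange (t+1)).map p)
      ((List.finRange n).filter (fun j => decide (v j ≠ 0))) := by
    rw [← filter_range_eq_map p hp]
    refine List.monotone_filter_right _ (fun j hj => ?_)
    simp only [decide_eq_true_eq] at hj ⊢
    obtain ⟨i, rfl⟩ := hj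
    exact hnz i
  have hsub2 := hsub.map v
  rw [List.map_map] at hsub2
  have hz : ∀ a ∈ ((List.finRange n).filter (fun j => decide (v j ≠ 0))).map v, a ≠ 0 := by
    intro a ha
    obtain ⟨j, hj, rfl⟩ := List.mem_map.1 ha
    simpa using (List.mem_filter.1 hj).2
  have hmono := (sc_sublist hsub2 hz).1
  rw [Sm_eq_map]
  refine le_trans ?_ hmono
  have : (List.finRange (t+1)).map (v ∘ p) = List.ofFn (v ∘ p) := (List.ofFn_eq_map).symm
  rw [this, sc_ofFn_alt (v ∘ p) (fun i => h i)]

open Matrix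

theorem stmt12' {m n : ℕ} (A : Matrix (Fin m) (Fin n) ℝ) (ε : ℕ → ℝ)
    (hε0 : ε 0 = 1) (hsv : ∀ r, ε r = 1 ∨ ε r = -1)
    (ha : ∀ x : Fin n → ℝ, Sm (A *ᵥ x) ≤ Sm x)
    (hb : ∀ x : Fin n → ℝ, A *ᵥ x ≠ 0 → ∀ r : ℕ, r ≤ min m n - 1 →
      Sm (A *ᵥ x) = r → Sm x = r →
      Real.sign (firstNz (A *ᵥ x)) = ε r * ε (r + 1) * Real.sign (firstNz x)) :
    ∀ r : ℕ, r ≤ min m n → ∀ (f : Fin r → Fin m) (g : Fin r → Fin n),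
      StrictMono f → StrictMono g → 0 ≤ ε r * (A.submatrix f g).det := by
  intro r
  induction r with
  | zero =>
    intro _ f g _ _
    rw [Matrix.det_fin_zero, hε0]
    norm_num
  | succ s IH =>
    intro hrmn f g hf hg
    by_cases hD : (A.submatrix f g).det = 0
    · rw [hD]; simp
    set D := A.submatrix f g with hD_def
    set w : Fin (s+1) → ℝ := fun j => (-1 : ℝ) ^ (j : ℕ) with hw
    set c : Fin (s+1) → ℝ := (D.det)⁻¹ • (Matrix.cramer D w) with hc
    have hDc : D *ᵥ c = w := by
      rw [hc, Matrix.mulVec_smul, Matrix.mulVec_cramer, smul_smul, inv_mul_cancel₀ hD, one_smul]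
    set x : Fin n → ℝ := fun j => ∑ i, if g i = j then c i else 0 with hx
    have hxg : ∀ i, x (g i) = c i := by
      intro i
      show (∑ i', if g i' = g i then c i' else 0) = c i
      rw [show (fun i' => if g i' = g i then c i' else 0)
          = fun i' => if i' = i then c i' else 0 from
        funext fun i' => by simp [hg.injective.eq_iff]]
      simp
    have hx0 : ∀ j, (∀ i, g i ≠ j) → x j = 0 := by
      intro j hj
      show (∑ i, if g i = j then c i else 0) = 0
      exact Finset.sum_eq_zero fun i _ => by simp [hj i]
    have hyf : ∀ j, (A *ᵥ x) (f j) = w j := by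
      intro j
      have h1 : (A *ᵥ x) (f j) = ∑ i, A (f j) (g i) * c i := by
        show (∑ jc, A (f j) jc * x jc) = _
        simp only [hx]
        simp_rw [Finset.mul_sum, mul_ite, mul_zero]
        rw [Finset.sum_comm]
        refine Finset.sum_congr rfl fun i _ => ?_
        rw [Finset.sum_ite_eq]
        simp
      have h2 : ∑ i, A (f j) (g i) * c i = (D *ᵥ c) j := by
        simp [Matrix.mulVec, dotProduct, hD_def, Matrix.submatrix_apply]
      rw [h1, h2, hDc]
    have hwalt : ∀ i : Fin s, w (i.castSucc) * w (i.succ) < 0 := by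
      intro i
      show ((-1:ℝ) ^ ((i.castSucc : Fin (s+1)) : ℕ)) * ((-1:ℝ) ^ ((i.succ : Fin (s+1)) : ℕ)) < 0
      rw [Fin.coe_castSucc, Fin.val_succ, ← pow_add]
      rw [Odd.neg_one_pow ⟨(i:ℕ), by ring⟩]
      norm_num
    have hSy_ge : s ≤ Sm (A *ᵥ x) :=
      Sm_ge (A *ᵥ x) f hf (fun i => by rw [hyf, hyf]; exact hwalt i)
    set L := (List.finRange n).filter (fun j => decide (x j ≠ 0)) with hL
    have hLsub : List.Sublist L ((List.finRange (s+1)).map g) := by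
      rw [← filter_range_eq_map g hg]
      refine List.monotone_filter_right _ (fun j hj => ?_)
      simp only [decide_eq_true_eq] at hj ⊢
      by_contra hcon
      push_neg at hcon
      exact hj (hx0 j hcon)
    have hLlen : L.length ≤ s + 1 := by
      have := hLsub.length_le
      rwa [List.length_map, List.length_finRange] at this
    have hSx_le : Sm x ≤ s := by
      rw [Sm_eq_map x, ← hL]
      calc signChanges (L.map x) ≤ (L.map x).length - 1 := sc_le _
        _ ≤ s := by rw [List.length_map]; omega
    have hSyx := ha x
    have hSy : Sm (A *ᵥ x) = s := le_antisymm (le_trans hSyx hSx_le) hSy_ge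
    have hSx : Sm x = s := le_antisymm hSx_le (le_trans hSy_ge hSyx)
    have hxne : ∃ j, x j ≠ 0 := by
      by_contra hcon
      push_neg at hcon
      have : (A *ᵥ x) (f 0) = 0 := by
        show (∑ jc, A (f 0) jc * x jc) = 0
        exact Finset.sum_eq_zero fun jc _ => by rw [hcon jc, mul_zero]
      rw [hyf 0] at this
      simp [hw] at this
    have hLne : L ≠ [] := by
      obtain ⟨j, hj⟩ := hxne
      exact List.ne_nil_of_mem (List.mem_filter.2 ⟨List.mem_finRange j, by simpa using hj⟩)
    have hLlen_ge : s + 1 ≤ L.length := by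
      have h1 : signChanges (L.map x) = s := by
        rw [← hSx, Sm_eq_map x, hL]
      have h2 := sc_le (L.map x)
      rw [h1, List.length_map] at h2
      have h3 : L.length ≠ 0 := by simpa [List.length_eq_zero_iff] using hLne
      omega
    have hLeq : L = (List.finRange (s+1)).map g :=
      hLsub.eq_of_length (by rw [List.length_map, List.length_finRange]; omega)
    have hcnz : ∀ i, c i ≠ 0 := by
      intro i
      have hmem : g i ∈ L := by
        rw [hLeq]; exact List.mem_map.2 ⟨i, List.mem_finRange i, rfl⟩
      have := (List.mem_filter.1 hmem).2
      simp only [decide_eq_true_eq] at this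
      rwa [hxg i] at this
    have hfx : firstNz x = c 0 := by
      rw [firstNz_eq_map x, ← hL, hLeq, List.map_map]
      rw [show List.finRange (s+1) = (0 : Fin (s+1)) :: (List.finRange s).map Fin.succ from
        List.finRange_succ]
      simp [hxg 0]
    set My := (List.finRange m).filter (fun j => decide ((A *ᵥ x) j ≠ 0)) with hMy
    have hf0mem : f 0 ∈ My := by
      refine List.mem_filter.2 ⟨List.mem_finRange _, ?_⟩
      rw [hyf 0]
      simp [hw]
    obtain ⟨q₀, t₀, hq⟩ : ∃ a l, My = a :: l :=
      List.exists_cons_of_ne_nil (List.ne_nil_of_mem hf0mem)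
    have hq0nz : (A *ᵥ x) q₀ ≠ 0 := by
      have : q₀ ∈ My := by rw [hq]; exact List.mem_cons_self
      simpa using (List.mem_filter.1 this).2
    have hq0le : q₀ ≤ f 0 := by
      have := hf0mem
      rw [hq] at this
      rcases List.mem_cons.1 this with h' | h'
      · exact le_of_eq h'.symm
      · have hpw : My.Pairwise (· < ·) := (List.pairwise_lt_finRange m).filter _
        rw [hq, List.pairwise_cons] at hpw
        exact (hpw.1 _ h').le
    have hfy : firstNz (A *ᵥ x) = (A *ᵥ x) q₀ := by
      rw [firstNz_eq_map (A *ᵥ x), ← hMy, hq]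
      simp
    have hypos : 0 < (A *ᵥ x) q₀ := by
      rcases hq0nz.lt_or_gt with hneg | hpos
      · exfalso
        have hw0 : (A *ᵥ x) (f 0) = 1 := by rw [hyf 0]; simp [hw]
        have hqlt : q₀ < f 0 := by
          refine lt_of_le_of_ne hq0le ?_
          intro e
          rw [e, hw0] at hneg
          linarith
        set p' : Fin (s+2) → Fin m := Fin.cons q₀ f with hp'
        have hp'mono : StrictMono p' := by
          rw [Fin.strictMono_iff_lt_succ]
          intro i
          refine Fin.cases ?_ ?_ i
          · rw [show (0 : Fin (s+1)).castSucc = 0 from rfl]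
            rw [hp']
            simpa [Fin.cons_zero, Fin.cons_succ] using hqlt
          · intro j
            rw [← Fin.succ_castSucc, hp']
            simp only [Fin.cons_succ]
            exact hf Fin.castSucc_lt_succ
        have halt : ∀ i : Fin (s+1), (A *ᵥ x) (p' i.castSucc) * (A *ᵥ x) (p' i.succ) < 0 := by
          intro i
          refine Fin.cases ?_ ?_ i
          · rw [show (0 : Fin (s+1)).castSucc = 0 from rfl, hp']
            simp only [Fin.cons_zero, Fin.cons_succ]
            rw [hw0]
            simpa using hneg
          · intro j
            rw [← Fin.succ_castSucc, hp']
            simp only [Fin.cons_succ]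
            rw [hyf, hyf]
            exact hwalt j
        have := Sm_ge (A *ᵥ x) p' hp'mono halt
        omega
      · exact hpos
    have hAxne : A *ᵥ x ≠ 0 := by
      intro h0
      have := congrFun h0 (f 0)
      rw [hyf 0] at this
      simp [hw] at this
    have hsmin : s ≤ min m n - 1 := by omega
    have hsign := hb x hAxne s hsmin hSy hSx
    rw [hfy, hfx, Real.sign_of_pos hypos] at hsign
    have hcram : c 0 = (D.det)⁻¹ * (D.updateCol 0 w).det := by
      rw [hc]
      simp [Matrix.cramer_apply]
    have hsubm : ∀ k : Fin (s+1), (D.updateCol 0 w).submatrix (Fin.succAbove k)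
        (Fin.succAbove (0 : Fin (s+1)))
        = A.submatrix (f ∘ Fin.succAbove k) (g ∘ Fin.succAbove (0 : Fin (s+1))) := by
      intro k
      ext a b
      rw [Matrix.submatrix_apply, Matrix.updateCol_apply, if_neg (Fin.succAbove_ne _ b)]
      rfl
    have hexp : (D.updateCol 0 w).det = ∑ k : Fin (s+1),
        (A.submatrix (f ∘ Fin.succAbove k) (g ∘ Fin.succAbove (0 : Fin (s+1)))).det := by
      rw [Matrix.det_succ_column (D.updateCol 0 w) 0]
      refine Finset.sum_congr rfl fun k _ => ?_
      rw [Matrix.updateCol_self, hsubm k]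
      have hwk : w k = (-1 : ℝ) ^ (k : ℕ) := by rw [hw]
      rw [hwk, show (((0 : Fin (s+1)) : ℕ)) = 0 from rfl, Nat.add_zero]
      have hone : (-1 : ℝ) ^ (k : ℕ) * (-1 : ℝ) ^ (k : ℕ) = 1 := by
        rw [← pow_add]
        exact Even.neg_one_pow ⟨(k : ℕ), rfl⟩
      rw [hone, one_mul]
    have hc0 : D.det * c 0 = ∑ k : Fin (s+1),
        (A.submatrix (f ∘ Fin.succAbove k) (g ∘ Fin.succAbove (0 : Fin (s+1)))).det := by
      rw [hcram, ← mul_assoc, mul_inv_cancel₀ hD, one_mul, hexp]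
    have hMk : ∀ k : Fin (s+1),
        0 ≤ ε s * (A.submatrix (f ∘ Fin.succAbove k) (g ∘ Fin.succAbove (0 : Fin (s+1)))).det :=
      fun k => IH (by omega) _ _ (hf.comp (Fin.strictMono_succAbove k))
        (hg.comp (Fin.strictMono_succAbove 0))
    have hT : 0 ≤ ε s * (D.det * c 0) := by
      rw [hc0, Finset.mul_sum]
      exact Finset.sum_nonneg fun k _ => hMk k
    rcases (hcnz 0).lt_or_gt with hcs | hcs
    · rw [Real.sign_of_neg hcs] at hsign
      rcases hsv s with e1 | e1 <;> rcases hsv (s+1) with e2 | e2 <;>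
          rw [e1, e2] at hsign <;> rw [e1] at hT <;> rw [e2] <;> norm_num at hsign <;> norm_num <;>
          nlinarith [hT, hcs]
    · rw [Real.sign_of_pos hcs] at hsign
      rcases hsv s with e1 | e1 <;> rcases hsv (s+1) with e2 | e2 <;>
          rw [e1, e2] at hsign <;> rw [e1] at hT <;> rw [e2] <;> norm_num at hsign <;> norm_num <;>
          nlinarith [hT, hcs]

theorem stmt12 {m n : ℕ} (A : Matrix (Fin m) (Fin n) ℝ) (ε : ℕ → ℝ)
    (hε0 : ε 0 = 1) (hsv : ∀ r, ε r = 1 ∨ ε r = -1)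
    (ha : ∀ x : Fin n → ℝ, Sm (A *ᵥ x) ≤ Sm x)
    (hb : ∀ x : Fin n → ℝ, A *ᵥ x ≠ 0 → ∀ r : ℕ, r ≤ min m n - 1 →
      Sm (A *ᵥ x) = r → Sm x = r →
      Real.sign (firstNz (A *ᵥ x)) = ε r * ε (r + 1) * Real.sign (firstNz x)) :
    srPattern A ε := by
  intro r _ hrmn f g hf hg
  exact stmt12' A ε hε0 hsv ha hb r hrmn f g hf hg
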